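/- Let X be a finite set, R : X → ℝ with R(x) > 0 for all x, and R' : X → ℝ with R'(x) ≥ 0. Let Z* = ∑_{x∈X} R(x), let Λ = Z* / (Z* + ∑_{x∈X} R'(x)), and define P(x) = R(x)/Z* and π(x) = (R(x)+R'(x))/(Z* + ∑_{x} R'(x)). Then the total variation distance TV(P, π) satisfies TV(P, π) ≤ 1 − Λ. -/

import Mathlib

open Finset Real

theorem stmt_1 (X : Type*) [Fintype X] [Nonempty X] (R R' : X → ℝ)
    (hR : ∀ x, 0 < R x) (hR' : ∀ x, 0 ≤ R' x) :
    (1/2) * ∑ x, |R x / (∑ y, R y) - (R x + R' x) / ((∑ y, R y) + ∑ y, R' y)|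
      ≤ 1 - (∑ y, R y) / ((∑ y, R y) + ∑ y, R' y) := by
  set Z := ∑ y, R y with hZdef
  set S := ∑ y, R' y with hSdef
  have hZ : 0 < Z := Finset.sum_pos (fun x _ => hR x) Finset.univ_nonempty
  have hS : 0 ≤ S := Finset.sum_nonneg (fun x _ => hR' x)
  have hW : 0 < Z + S := by linarith
  have key : ∀ x : X, |R x / Z - (R x + R' x) / (Z + S)|
      ≤ (R x * S + R' x * Z) / (Z * (Z + S)) := by
    intro x
    have h1 : R x / Z - (R x + R' x) / (Z + S)
        = (R x * S - R' x * Z) / (Z * (Z + S)) := by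
      field_simp; ring
    rw [h1, abs_div, abs_of_pos (show (0:ℝ) < Z * (Z + S) by positivity)]
    gcongr
    calc |R x * S - R' x * Z| ≤ |R x * S| + |R' x * Z| := abs_sub _ _
      _ = R x * S + R' x * Z := by
          rw [abs_of_nonneg (mul_nonneg (hR x).le hS), abs_of_nonneg (mul_nonneg (hR' x) hZ.le)]
  have hsum : ∑ x, |R x / Z - (R x + R' x) / (Z + S)|
      ≤ ∑ x, (R x * S + R' x * Z) / (Z * (Z + S)) :=
    Finset.sum_le_sum fun x _ => key x
  have hval : ∑ x, (R x * S + R' x * Z) / (Z * (Z + S)) = 2 * S / (Z + S) := by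
    rw [← Finset.sum_div]
    have : ∑ x, (R x * S + R' x * Z) = Z * S + S * Z := by
      rw [Finset.sum_add_distrib, ← Finset.sum_mul, ← Finset.sum_mul, ← hZdef, ← hSdef]
    rw [this]
    field_simp; ring
  have h2 : 1 - Z / (Z + S) = S / (Z + S) := by field_simp; ring
  rw [h2]
  calc (1/2) * ∑ x, |R x / Z - (R x + R' x) / (Z + S)|
      ≤ (1/2) * (2 * S / (Z + S)) := by linarith [hsum, hval ▸ hsum]
    _ = S / (Z + S) := by ring
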